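/- arXiv:1611.09749 — 3 statements merged into one kernel-verified Lean document; each statement's English description precedes it below -/
import Mathlib

section
/- Let R be a commutative integral domain with identity, G an ample Hausdorff groupoid, Γ a discrete group, and c : G → Γ a continuous cocycle. If (m, n) is a normaliser of D_R(G) in A_R(G) with m ∈ A_R(G)_g and n ∈ A_R(G)_{g⁻¹}, then mn = 1_{s(supp(n))} = 1_{r(supp(m))} and nm = 1_{s(supp(m))} = 1_{r(supp(n))}; in particular mn and nm are indicator functions of compact open subsets of G⁰. -/
structure GroupoidStruct (G : Type*) where
  src : G → G
  rng : G → G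
  inv : G → G
  mul : G → G → G
  rng_src : ∀ a, rng (src a) = src a
  src_src : ∀ a, src (src a) = src a
  src_rng : ∀ a, src (rng a) = rng a
  rng_rng : ∀ a, rng (rng a) = rng a
  src_inv : ∀ a, src (inv a) = rng a
  rng_inv : ∀ a, rng (inv a) = src a
  src_mul : ∀ a b, src a = rng b → src (mul a b) = src b
  rng_mul : ∀ a b, src a = rng b → rng (mul a b) = rng a
  mul_assoc' : ∀ a b c, src a = rng b → src b = rng c →
    mul (mul a b) c = mul a (mul b c)
  unit_mul : ∀ a, mul (rng a) a = a
  mul_unit : ∀ a, mul a (src a) = a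
  inv_mul : ∀ a, mul (inv a) a = src a
  mul_inv : ∀ a, mul a (inv a) = rng a
  inv_inv : ∀ a, inv (inv a) = a

namespace GroupoidStruct

variable {G : Type*} (𝒢 : GroupoidStruct G)

/-- The unit space `G⁰` of the groupoid. -/
def units : Set G := {x | 𝒢.src x = x}

/-- The set product `UV` of two subsets of the groupoid. -/
def setMul (U V : Set G) : Set G :=
  {η | ∃ a ∈ U, ∃ b ∈ V, 𝒢.src a = 𝒢.rng b ∧ 𝒢.mul a b = η}

/-- A bisection: a set on which the source and range maps are injective. -/
def IsBisection (U : Set G) : Prop := Set.InjOn 𝒢.src U ∧ Set.InjOn 𝒢.rng U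

/-- A cocycle into a group: a groupoid homomorphism. -/
def IsCocycle {Γ : Type*} [Group Γ] (c : G → Γ) : Prop :=
  ∀ a b, 𝒢.src a = 𝒢.rng b → c (𝒢.mul a b) = c a * c b

end GroupoidStruct

/-- A Hausdorff étale topological groupoid (the Hausdorff condition is imposed via a
`T2Space` instance on `G`). -/
structure EtaleGroupoid (G : Type*) [TopologicalSpace G] extends GroupoidStruct G where
  continuous_src : Continuous src
  continuous_rng : Continuous rng
  continuous_inv : Continuous inv
  continuousOn_mul : ContinuousOn (fun p : G × G => mul p.1 p.2) {p | src p.1 = rng p.2}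
  etale_src : IsLocalHomeomorph src
  etale_rng : IsLocalHomeomorph rng

/-- An ample groupoid: an étale groupoid whose unit space has a basis of compact open sets. -/
structure AmpleGroupoid (G : Type*) [TopologicalSpace G] extends EtaleGroupoid G where
  ample : ∀ x, src x = x → ∀ U : Set G, IsOpen U → x ∈ U →
    ∃ K : Set G, IsCompact K ∧ IsOpen K ∧ x ∈ K ∧ K ⊆ U ∧ ∀ y ∈ K, src y = y

/-- The convolution product on `R`-valued functions on the groupoid `G`:
`(f * g)(η) = ∑_{αβ = η} f(α) g(β)`. -/
noncomputable def conv {G : Type*} (𝒢 : GroupoidStruct G) {R : Type*} [CommRing R]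
    (f g : G → R) : G → R :=
  fun η => ∑ᶠ (p : G × G) (_ : 𝒢.src p.1 = 𝒢.rng p.2 ∧ 𝒢.mul p.1 p.2 = η), f p.1 * g p.2

/-- The carrier of the Steinberg algebra `A_R(G)`: locally constant compactly supported
`R`-valued functions on `G`. -/
def SteinbergSet {G : Type*} [TopologicalSpace G] (𝒢 : GroupoidStruct G)
    (R : Type*) [CommRing R] : Set (G → R) :=
  {f | IsLocallyConstant f ∧ IsCompact (Function.support f)}

/-- The diagonal subalgebra `D_R(G)`: elements of `A_R(G)` supported on the unit space. -/
def DiagSet {G : Type*} [TopologicalSpace G] (𝒢 : GroupoidStruct G)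
    (R : Type*) [CommRing R] : Set (G → R) :=
  {f | f ∈ SteinbergSet 𝒢 R ∧ Function.support f ⊆ GroupoidStruct.units 𝒢}

/-- `f` is homogeneous of degree `g` for the grading induced by the cocycle `c`,
i.e. `supp f ⊆ c⁻¹(g)`. -/
def InGrade {G : Type*} {Γ : Type*} [Group Γ] {R : Type*} [CommRing R]
    (c : G → Γ) (g : Γ) (f : G → R) : Prop :=
  ∀ η, f η ≠ 0 → c η = g

/-- A normaliser of the diagonal `D_R(G)` in `A_R(G)`: a pair `(m, n)` with
`m D n ∪ n D m ⊆ D`, `mnm = m` and `nmn = n`. -/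
def IsNormaliser {G : Type*} [TopologicalSpace G] (𝒢 : GroupoidStruct G)
    (R : Type*) [CommRing R] (m n : G → R) : Prop :=
  m ∈ SteinbergSet 𝒢 R ∧ n ∈ SteinbergSet 𝒢 R ∧
  (∀ d ∈ DiagSet 𝒢 R, conv 𝒢 m (conv 𝒢 d n) ∈ DiagSet 𝒢 R ∧
      conv 𝒢 n (conv 𝒢 d m) ∈ DiagSet 𝒢 R) ∧
  conv 𝒢 m (conv 𝒢 n m) = m ∧ conv 𝒢 n (conv 𝒢 m n) = n

/-- The involution `f*(η) = (f(η⁻¹))*` on `R`-valued functions on the groupoid. -/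
def starF {G : Type*} (𝒢 : GroupoidStruct G) {R : Type*} [CommRing R] [StarRing R]
    (f : G → R) : G → R :=
  fun η => star (f (𝒢.inv η))

section AuxGroupoid

variable {G : Type*} (𝒢 : GroupoidStruct G)

lemma GroupoidStruct.unit_rng {u : G} (hu : 𝒢.src u = u) : 𝒢.rng u = u := by
  conv_lhs => rw [← hu]
  rw [𝒢.rng_src, hu]

lemma GroupoidStruct.cancel_left {a b : G} (hab : 𝒢.src a = 𝒢.rng b) :
    𝒢.mul (𝒢.inv a) (𝒢.mul a b) = b := by
  rw [← 𝒢.mul_assoc' _ _ _ (𝒢.src_inv a) hab, 𝒢.inv_mul, hab, 𝒢.unit_mul]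

lemma GroupoidStruct.cancel_right {a b : G} (hab : 𝒢.src a = 𝒢.rng b) :
    𝒢.mul (𝒢.mul a b) (𝒢.inv b) = a := by
  rw [𝒢.mul_assoc' a b (𝒢.inv b) hab (𝒢.rng_inv b).symm, 𝒢.mul_inv, ← hab, 𝒢.mul_unit]

end AuxGroupoid

section AuxConv

variable {G : Type*} (𝒢 : GroupoidStruct G) {R : Type*} [CommRing R]

open Classical

/-- The summand function of the convolution. -/
noncomputable def cF (f g : G → R) (η : G) : G × G → R :=
  fun p => if 𝒢.src p.1 = 𝒢.rng p.2 ∧ 𝒢.mul p.1 p.2 = η then f p.1 * g p.2 else 0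

lemma conv_apply (f g : G → R) (η : G) : conv 𝒢 f g η = ∑ᶠ p, cF 𝒢 f g η p := by
  classical
  unfold conv cF
  congr 1
  funext p
  exact finsum_eq_if

lemma conv_ne_zero {f g : G → R} {η : G} (hη : conv 𝒢 f g η ≠ 0) :
    ∃ a b, f a ≠ 0 ∧ g b ≠ 0 ∧ 𝒢.src a = 𝒢.rng b ∧ 𝒢.mul a b = η := by
  by_contra hc
  push_neg at hc
  apply hη
  rw [conv_apply]
  refine finsum_eq_zero_of_forall_eq_zero fun p => ?_
  unfold cF
  split_ifs with hcnd
  · by_cases hf : f p.1 = 0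
    · simp [hf]
    by_cases hg : g p.2 = 0
    · simp [hg]
    exact absurd hcnd.2 (hc _ _ hf hg hcnd.1)
  · rfl

lemma conv_diag_left {d : G → R} (hd : ∀ x, d x ≠ 0 → 𝒢.src x = x) (f : G → R) (η : G) :
    conv 𝒢 d f η = d (𝒢.rng η) * f η := by
  rw [conv_apply]
  have h1 : cF 𝒢 d f η (𝒢.rng η, η) = d (𝒢.rng η) * f η := by
    unfold cF
    rw [if_pos ⟨𝒢.src_rng η, 𝒢.unit_mul η⟩]
  rw [finsum_eq_single _ (𝒢.rng η, η) ?_, h1]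
  intro p hp
  unfold cF
  split_ifs with hcnd
  · by_cases hda : d p.1 = 0
    · simp [hda]
    exfalso
    apply hp
    have hu : 𝒢.src p.1 = p.1 := hd _ hda
    have h2 : p.1 = 𝒢.rng p.2 := by rw [← hu]; exact hcnd.1
    have hb : p.2 = η := by rw [← hcnd.2, h2, 𝒢.unit_mul]
    have ha : p.1 = 𝒢.rng η := by rw [h2, hb]
    exact Prod.ext ha hb
  · rfl

lemma conv_diag_right {d : G → R} (hd : ∀ x, d x ≠ 0 → 𝒢.src x = x) (f : G → R) (η : G) :
    conv 𝒢 f d η = f η * d (𝒢.src η) := by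
  rw [conv_apply]
  have h1 : cF 𝒢 f d η (η, 𝒢.src η) = f η * d (𝒢.src η) := by
    unfold cF
    rw [if_pos ⟨(𝒢.rng_src η).symm, 𝒢.mul_unit η⟩]
  rw [finsum_eq_single _ (η, 𝒢.src η) ?_, h1]
  intro p hp
  unfold cF
  split_ifs with hcnd
  · by_cases hdb : d p.2 = 0
    · simp [hdb]
    exfalso
    apply hp
    have hu : 𝒢.src p.2 = p.2 := hd _ hdb
    have h2 : p.2 = 𝒢.rng p.2 := by rw [𝒢.unit_rng hu]
    have ha : p.1 = η := by rw [← hcnd.2]; conv_lhs => rw [← 𝒢.mul_unit p.1, hcnd.1, ← h2]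
    have hb : p.2 = 𝒢.src η := by
      rw [← hcnd.2, 𝒢.src_mul _ _ hcnd.1, hu]
    exact Prod.ext ha hb
  · rfl

end AuxConv
section AuxFin

open Classical Function

variable {G : Type*} [TopologicalSpace G] (𝒢 : GroupoidStruct G) {R : Type*} [CommRing R]

lemma fiber_finite {φ : G → G} (hφ : IsLocalHomeomorph φ) {K : Set G} (hK : IsCompact K)
    (u : G) : {a | a ∈ K ∧ φ a = u}.Finite := by
  choose e he hfe using hφ
  obtain ⟨t, _, hcov⟩ := hK.elim_nhds_subcover (fun x => (e x).source)
    (fun x _ => (e x).open_source.mem_nhds (he x))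
  have hsub : {a | a ∈ K ∧ φ a = u} ⊆ ⋃ x ∈ t, {a | a ∈ (e x).source ∧ φ a = u} := by
    rintro a ⟨haK, hau⟩
    have h := hcov haK
    simp only [Set.mem_iUnion] at h ⊢
    obtain ⟨x, hxt, hax⟩ := h
    exact ⟨x, hxt, hax, hau⟩
  refine Set.Finite.subset (Set.Finite.biUnion t.finite_toSet fun x _ => ?_) hsub
  refine Set.Subsingleton.finite fun a ha b hb => ?_
  refine (e x).injOn ha.1 hb.1 ?_
  have h1 : (e x) a = φ a := by rw [hfe x]
  have h2 : (e x) b = φ b := by rw [hfe x]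
  rw [h1, h2, ha.2, hb.2]

end AuxFin

section AuxFin2

open Classical Function

variable {G : Type*} (𝒢 : GroupoidStruct G) {R : Type*} [CommRing R]

lemma support_cF_subset_left (f g : G → R) (η : G) :
    Function.support (cF 𝒢 f g η) ⊆
      (fun a => (a, 𝒢.mul (𝒢.inv a) η)) '' {a | f a ≠ 0 ∧ 𝒢.rng a = 𝒢.rng η} := by
  intro p hp
  rw [Function.mem_support] at hp
  unfold cF at hp
  split_ifs at hp with hcnd
  · obtain ⟨h1, h2⟩ := hcnd
    refine ⟨p.1, ⟨left_ne_zero_of_mul hp, by rw [← h2, 𝒢.rng_mul _ _ h1]⟩, ?_⟩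
    have : 𝒢.mul (𝒢.inv p.1) η = p.2 := by rw [← h2, 𝒢.cancel_left h1]
    simp only [this, Prod.mk.eta]
  · exact absurd rfl hp

lemma support_cF_subset_right (f g : G → R) (η : G) :
    Function.support (cF 𝒢 f g η) ⊆
      (fun c => (𝒢.mul η (𝒢.inv c), c)) '' {c | g c ≠ 0 ∧ 𝒢.src c = 𝒢.src η} := by
  intro p hp
  rw [Function.mem_support] at hp
  unfold cF at hp
  split_ifs at hp with hcnd
  · obtain ⟨h1, h2⟩ := hcnd
    refine ⟨p.2, ⟨right_ne_zero_of_mul hp, by rw [← h2, 𝒢.src_mul _ _ h1]⟩, ?_⟩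
    have : 𝒢.mul η (𝒢.inv p.2) = p.1 := by rw [← h2, 𝒢.cancel_right h1]
    simp only [this, Prod.mk.eta]
  · exact absurd rfl hp

lemma conv_eq_sum' (f g : G → R) (η : G) (S : Finset (G × G))
    (hS : Function.support (cF 𝒢 f g η) ⊆ ↑S) :
    conv 𝒢 f g η = ∑ p ∈ S, cF 𝒢 f g η p := by
  rw [conv_apply]
  exact finsum_eq_sum_of_support_subset _ hS

end AuxFin2
section AuxAssoc

open Classical

variable {G : Type*} (𝒢 : GroupoidStruct G) {R : Type*} [CommRing R]

theorem conv_assoc (f g h : G → R)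
    (Hf : ∀ u, {a | f a ≠ 0 ∧ 𝒢.rng a = u}.Finite)
    (Hh : ∀ u, {c | h c ≠ 0 ∧ 𝒢.src c = u}.Finite) :
    conv 𝒢 (conv 𝒢 f g) h = conv 𝒢 f (conv 𝒢 g h) := by
  classical
  funext η
  have hbval : ∀ a c b, 𝒢.src a = 𝒢.rng b → 𝒢.src b = 𝒢.rng c → 𝒢.mul (𝒢.mul a b) c = η →
      b = 𝒢.mul (𝒢.inv a) (𝒢.mul η (𝒢.inv c)) := by
    intro a c b h1 h2 h3
    have hx : 𝒢.mul η (𝒢.inv c) = 𝒢.mul a b := by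
      rw [← h3]
      exact 𝒢.cancel_right (by rw [𝒢.src_mul a b h1, h2])
    rw [hx, 𝒢.cancel_left h1]
  have hxab : ∀ a c b, 𝒢.src a = 𝒢.rng b → 𝒢.src b = 𝒢.rng c → 𝒢.mul (𝒢.mul a b) c = η →
      𝒢.mul η (𝒢.inv c) = 𝒢.mul a b := by
    intro a c b h1 h2 h3
    rw [← h3]
    exact 𝒢.cancel_right (by rw [𝒢.src_mul a b h1, h2])
  have hybc : ∀ a c b, 𝒢.src a = 𝒢.rng b → 𝒢.src b = 𝒢.rng c → 𝒢.mul (𝒢.mul a b) c = η →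
      𝒢.mul b c = 𝒢.mul (𝒢.inv a) η := by
    intro a c b h1 h2 h3
    rw [← h3, 𝒢.mul_assoc' a b c h1 h2,
      𝒢.cancel_left (by rw [𝒢.rng_mul b c h2]; exact h1)]
  have hL : conv 𝒢 (conv 𝒢 f g) h η = ∑ c ∈ (Hh (𝒢.src η)).toFinset,
      ∑ a ∈ (Hf (𝒢.rng η)).toFinset,
        (if (∃ b, 𝒢.src a = 𝒢.rng b ∧ 𝒢.src b = 𝒢.rng c ∧ 𝒢.mul (𝒢.mul a b) c = η) then
          f a * g (𝒢.mul (𝒢.inv a) (𝒢.mul η (𝒢.inv c))) * h c else 0) := by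
    rw [conv_eq_sum' 𝒢 _ h η (((Hh (𝒢.src η)).toFinset).image
        (fun c => (𝒢.mul η (𝒢.inv c), c)))
      ((support_cF_subset_right 𝒢 _ h η).trans
        (by rw [Finset.coe_image, Set.Finite.coe_toFinset]))]
    rw [Finset.sum_image (fun x _ y _ hxy => congrArg Prod.snd hxy)]
    refine Finset.sum_congr rfl fun c _ => ?_
    show (if 𝒢.src (𝒢.mul η (𝒢.inv c)) = 𝒢.rng c ∧ 𝒢.mul (𝒢.mul η (𝒢.inv c)) c = η then
      conv 𝒢 f g (𝒢.mul η (𝒢.inv c)) * h c else 0) = _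
    by_cases hC1 : 𝒢.src (𝒢.mul η (𝒢.inv c)) = 𝒢.rng c ∧ 𝒢.mul (𝒢.mul η (𝒢.inv c)) c = η
    · rw [if_pos hC1]
      have hrx : 𝒢.rng η = 𝒢.rng (𝒢.mul η (𝒢.inv c)) := by
        conv_lhs => rw [← hC1.2]
        rw [𝒢.rng_mul _ _ hC1.1]
      rw [conv_eq_sum' 𝒢 f g (𝒢.mul η (𝒢.inv c)) (((Hf (𝒢.rng η)).toFinset).image
          (fun a => (a, 𝒢.mul (𝒢.inv a) (𝒢.mul η (𝒢.inv c)))))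
        ((support_cF_subset_left 𝒢 f g _).trans
          (by rw [Finset.coe_image, Set.Finite.coe_toFinset, hrx]))]
      rw [Finset.sum_image (fun x _ y _ hxy => congrArg Prod.fst hxy), Finset.sum_mul]
      refine Finset.sum_congr rfl fun a _ => ?_
      show (if 𝒢.src a = 𝒢.rng (𝒢.mul (𝒢.inv a) (𝒢.mul η (𝒢.inv c))) ∧
            𝒢.mul a (𝒢.mul (𝒢.inv a) (𝒢.mul η (𝒢.inv c))) = 𝒢.mul η (𝒢.inv c) then
          f a * g (𝒢.mul (𝒢.inv a) (𝒢.mul η (𝒢.inv c))) else 0) * h c = _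
      rw [ite_mul, zero_mul]
      by_cases hC2 : 𝒢.src a = 𝒢.rng (𝒢.mul (𝒢.inv a) (𝒢.mul η (𝒢.inv c))) ∧
          𝒢.mul a (𝒢.mul (𝒢.inv a) (𝒢.mul η (𝒢.inv c))) = 𝒢.mul η (𝒢.inv c)
      · rw [if_pos hC2, if_pos]
        refine ⟨𝒢.mul (𝒢.inv a) (𝒢.mul η (𝒢.inv c)), hC2.1, ?_, ?_⟩
        · rw [← 𝒢.src_mul a _ hC2.1, hC2.2]
          exact hC1.1
        · rw [hC2.2, hC1.2]
      · rw [if_neg hC2, if_neg]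
        rintro ⟨b, h1, h2, h3⟩
        apply hC2
        have hb := hbval a c b h1 h2 h3
        exact ⟨by rw [← hb]; exact h1, by rw [← hb]; exact (hxab a c b h1 h2 h3).symm⟩
    · rw [if_neg hC1]
      symm
      refine Finset.sum_eq_zero fun a _ => ?_
      rw [if_neg]
      rintro ⟨b, h1, h2, h3⟩
      apply hC1
      have hx := hxab a c b h1 h2 h3
      exact ⟨by rw [hx, 𝒢.src_mul a b h1]; exact h2, by rw [hx]; exact h3⟩
  have hR : conv 𝒢 f (conv 𝒢 g h) η = ∑ a ∈ (Hf (𝒢.rng η)).toFinset,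
      ∑ c ∈ (Hh (𝒢.src η)).toFinset,
        (if (∃ b, 𝒢.src a = 𝒢.rng b ∧ 𝒢.src b = 𝒢.rng c ∧ 𝒢.mul (𝒢.mul a b) c = η) then
          f a * g (𝒢.mul (𝒢.inv a) (𝒢.mul η (𝒢.inv c))) * h c else 0) := by
    rw [conv_eq_sum' 𝒢 f _ η (((Hf (𝒢.rng η)).toFinset).image
        (fun a => (a, 𝒢.mul (𝒢.inv a) η)))
      ((support_cF_subset_left 𝒢 f _ η).trans
        (by rw [Finset.coe_image, Set.Finite.coe_toFinset]))]
    rw [Finset.sum_image (fun x _ y _ hxy => congrArg Prod.fst hxy)]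
    refine Finset.sum_congr rfl fun a _ => ?_
    show (if 𝒢.src a = 𝒢.rng (𝒢.mul (𝒢.inv a) η) ∧ 𝒢.mul a (𝒢.mul (𝒢.inv a) η) = η then
      f a * conv 𝒢 g h (𝒢.mul (𝒢.inv a) η) else 0) = _
    by_cases hD1 : 𝒢.src a = 𝒢.rng (𝒢.mul (𝒢.inv a) η) ∧ 𝒢.mul a (𝒢.mul (𝒢.inv a) η) = η
    · rw [if_pos hD1]
      have hsy : 𝒢.src η = 𝒢.src (𝒢.mul (𝒢.inv a) η) := by
        conv_lhs => rw [← hD1.2]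
        rw [𝒢.src_mul a _ hD1.1]
      rw [conv_eq_sum' 𝒢 g h (𝒢.mul (𝒢.inv a) η) (((Hh (𝒢.src η)).toFinset).image
          (fun c => (𝒢.mul (𝒢.mul (𝒢.inv a) η) (𝒢.inv c), c)))
        ((support_cF_subset_right 𝒢 g h _).trans
          (by rw [Finset.coe_image, Set.Finite.coe_toFinset, hsy]))]
      rw [Finset.sum_image (fun x _ y _ hxy => congrArg Prod.snd hxy), Finset.mul_sum]
      refine Finset.sum_congr rfl fun c _ => ?_
      show f a * (if 𝒢.src (𝒢.mul (𝒢.mul (𝒢.inv a) η) (𝒢.inv c)) = 𝒢.rng c ∧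
            𝒢.mul (𝒢.mul (𝒢.mul (𝒢.inv a) η) (𝒢.inv c)) c = 𝒢.mul (𝒢.inv a) η then
          g (𝒢.mul (𝒢.mul (𝒢.inv a) η) (𝒢.inv c)) * h c else 0) = _
      rw [mul_ite, mul_zero]
      by_cases hD2 : 𝒢.src (𝒢.mul (𝒢.mul (𝒢.inv a) η) (𝒢.inv c)) = 𝒢.rng c ∧
          𝒢.mul (𝒢.mul (𝒢.mul (𝒢.inv a) η) (𝒢.inv c)) c = 𝒢.mul (𝒢.inv a) η
      · rw [if_pos hD2]
        have hab : 𝒢.src a = 𝒢.rng (𝒢.mul (𝒢.mul (𝒢.inv a) η) (𝒢.inv c)) := by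
          have h5 : 𝒢.rng (𝒢.mul (𝒢.mul (𝒢.inv a) η) (𝒢.inv c)) = 𝒢.rng (𝒢.mul (𝒢.inv a) η) := by
            conv_rhs => rw [← hD2.2, 𝒢.rng_mul _ _ hD2.1]
          rw [h5]
          exact hD1.1
        have h3 : 𝒢.mul (𝒢.mul a (𝒢.mul (𝒢.mul (𝒢.inv a) η) (𝒢.inv c))) c = η := by
          rw [𝒢.mul_assoc' a _ c hab hD2.1, hD2.2, hD1.2]
        rw [if_pos ⟨𝒢.mul (𝒢.mul (𝒢.inv a) η) (𝒢.inv c), hab, hD2.1, h3⟩]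
        have hb := hbval a c (𝒢.mul (𝒢.mul (𝒢.inv a) η) (𝒢.inv c)) hab hD2.1 h3
        rw [← hb, mul_assoc]
      · rw [if_neg hD2, if_neg]
        rintro ⟨b, h1, h2, h3⟩
        apply hD2
        have hy := hybc a c b h1 h2 h3
        have hb : b = 𝒢.mul (𝒢.mul (𝒢.inv a) η) (𝒢.inv c) := by
          rw [← hy]
          exact (𝒢.cancel_right h2).symm
        exact ⟨by rw [← hb]; exact h2, by rw [← hb, hy]⟩
    · rw [if_neg hD1]
      symm
      refine Finset.sum_eq_zero fun c _ => ?_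
      rw [if_neg]
      rintro ⟨b, h1, h2, h3⟩
      apply hD1
      have hy := hybc a c b h1 h2 h3
      constructor
      · rw [← hy, 𝒢.rng_mul b c h2]
        exact h1
      · rw [← hy, ← 𝒢.mul_assoc' a b c h1 h2]
        exact h3
  rw [hL, hR, Finset.sum_comm]

end AuxAssoc
section AuxDiag

open Classical Function

variable {G : Type*} {R : Type*} [CommRing R]

lemma conv_indicator_absorb (𝒢 : GroupoidStruct G) (m n : G → R) {K : Set G}
    (hKu : ∀ x ∈ K, 𝒢.src x = x) (hKm : ∀ a, m a ≠ 0 → 𝒢.src a ∈ K) :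
    conv 𝒢 m (conv 𝒢 (K.indicator (fun _ => (1 : R))) n) = conv 𝒢 m n := by
  funext η
  rw [conv_apply, conv_apply]
  congr 1
  funext p
  unfold cF
  split_ifs with hcnd
  · by_cases hm : m p.1 = 0
    · rw [hm, zero_mul, zero_mul]
    congr 1
    rw [conv_diag_left 𝒢 (fun x hx => hKu x (by
      by_contra hxK
      exact hx (Set.indicator_of_notMem hxK _))) n p.2]
    have hmem : 𝒢.rng p.2 ∈ K := by rw [← hcnd.1]; exact hKm _ hm
    rw [Set.indicator_of_mem hmem, one_mul]
  · rfl

lemma indicator_mem_DiagSet [TopologicalSpace G] [Nontrivial R] (𝒢 : GroupoidStruct G)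
    {K : Set G} (hKo : IsOpen K) (hKc : IsClosed K) (hKcpt : IsCompact K)
    (hKu : K ⊆ GroupoidStruct.units 𝒢) :
    Set.indicator K (fun _ => (1 : R)) ∈ DiagSet 𝒢 R := by
  have hsupp : Function.support (K.indicator (fun _ => (1 : R))) = K := by
    rw [show (fun _ : G => (1 : R)) = (1 : G → R) from rfl, Set.support_indicator]
    simp
  refine ⟨⟨?_, ?_⟩, ?_⟩
  · intro s
    rw [Set.indicator_const_preimage_eq_union K s (1 : R)]
    split_ifs <;>
      simp only [Set.union_empty, Set.empty_union, Set.union_compl_self] <;>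
      first
        | exact isOpen_univ
        | exact hKo
        | exact hKc.isOpen_compl
        | exact isOpen_empty
        | exact hKo.union hKc.isOpen_compl
  · rw [hsupp]; exact hKcpt
  · rw [hsupp]; exact hKu

end AuxDiag
/-- If `(m, n)` is a normaliser of `D_R(G)` with `m` of degree `g` and `n` of degree `g⁻¹`
for the grading induced by a continuous cocycle `c : G → Γ`, then
`mn = 1_{s(supp n)} = 1_{r(supp m)}` and `nm = 1_{s(supp m)} = 1_{r(supp n)}`; in particular
`mn` and `nm` are indicator functions of compact open subsets of `G⁰`. -/
theorem normaliser_mul_eq_indicator {G : Type*} [TopologicalSpace G] [T2Space G]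
    {R : Type*} [CommRing R] [IsDomain R] (𝒢 : AmpleGroupoid G)
    {Γ : Type*} [Group Γ] (c : G → Γ) (hc : 𝒢.toGroupoidStruct.IsCocycle c)
    (hcont : IsLocallyConstant c) (g : Γ) (m n : G → R)
    (hnorm : IsNormaliser 𝒢.toGroupoidStruct R m n)
    (hm : InGrade c g m) (hn : InGrade c g⁻¹ n) :
    conv 𝒢.toGroupoidStruct m n
        = Set.indicator (𝒢.toGroupoidStruct.src '' Function.support n) (fun _ => (1 : R)) ∧
    𝒢.toGroupoidStruct.src '' Function.support n
        = 𝒢.toGroupoidStruct.rng '' Function.support m ∧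
    conv 𝒢.toGroupoidStruct n m
        = Set.indicator (𝒢.toGroupoidStruct.src '' Function.support m) (fun _ => (1 : R)) ∧
    𝒢.toGroupoidStruct.src '' Function.support m
        = 𝒢.toGroupoidStruct.rng '' Function.support n ∧
    IsCompact (𝒢.toGroupoidStruct.src '' Function.support n) ∧
    IsOpen (𝒢.toGroupoidStruct.src '' Function.support n) ∧
    𝒢.toGroupoidStruct.src '' Function.support n ⊆ GroupoidStruct.units 𝒢.toGroupoidStruct ∧
    IsCompact (𝒢.toGroupoidStruct.src '' Function.support m) ∧
    IsOpen (𝒢.toGroupoidStruct.src '' Function.support m) ∧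
    𝒢.toGroupoidStruct.src '' Function.support m ⊆ GroupoidStruct.units 𝒢.toGroupoidStruct := by

  classical
  obtain ⟨⟨hmlc, hmcpt⟩, ⟨hnlc, hncpt⟩, hDcond, hmnm, hnmn⟩ := hnorm
  set 𝒮 := 𝒢.toGroupoidStruct with h𝒮
  -- supports are open
  have hMopen : IsOpen (Function.support m) := by
    have he : Function.support m = m ⁻¹' {(0 : R)}ᶜ := by
      ext x; simp [Function.mem_support]
    rw [he]; exact hmlc _
  have hNopen : IsOpen (Function.support n) := by
    have he : Function.support n = n ⁻¹' {(0 : R)}ᶜ := by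
      ext x; simp [Function.mem_support]
    rw [he]; exact hnlc _
  -- fiber finiteness
  have Hmr : ∀ u, {a | m a ≠ 0 ∧ 𝒮.rng a = u}.Finite :=
    fun u => fiber_finite 𝒢.etale_rng hmcpt u
  have Hms : ∀ u, {a | m a ≠ 0 ∧ 𝒮.src a = u}.Finite :=
    fun u => fiber_finite 𝒢.etale_src hmcpt u
  have Hnr : ∀ u, {a | n a ≠ 0 ∧ 𝒮.rng a = u}.Finite :=
    fun u => fiber_finite 𝒢.etale_rng hncpt u
  have Hns : ∀ u, {a | n a ≠ 0 ∧ 𝒮.src a = u}.Finite :=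
    fun u => fiber_finite 𝒢.etale_src hncpt u
  -- the four image sets
  set A := 𝒮.src '' Function.support m with hA
  set B := 𝒮.src '' Function.support n with hB
  set A' := 𝒮.rng '' Function.support m with hA'
  set B' := 𝒮.rng '' Function.support n with hB'
  have hAcpt : IsCompact A := hmcpt.image 𝒢.continuous_src
  have hBcpt : IsCompact B := hncpt.image 𝒢.continuous_src
  have hAopen : IsOpen A := (IsLocalHomeomorph.isOpenMap 𝒢.etale_src) _ hMopen
  have hBopen : IsOpen B := (IsLocalHomeomorph.isOpenMap 𝒢.etale_src) _ hNopen
  have hAunits : A ⊆ GroupoidStruct.units 𝒮 := by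
    rintro x ⟨a, _, rfl⟩; exact 𝒮.src_src a
  have hBunits : B ⊆ GroupoidStruct.units 𝒮 := by
    rintro x ⟨a, _, rfl⟩; exact 𝒮.src_src a
  -- p := conv m n and q := conv n m lie in the diagonal
  have hpD : conv 𝒮 m n ∈ DiagSet 𝒮 R := by
    have h1 := (hDcond _ (indicator_mem_DiagSet 𝒮 hAopen hAcpt.isClosed hAcpt hAunits)).1
    rwa [conv_indicator_absorb 𝒮 m n (fun x hx => hAunits hx) (fun a ha => ⟨a, ha, rfl⟩)] at h1
  have hqD : conv 𝒮 n m ∈ DiagSet 𝒮 R := by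
    have h1 := (hDcond _ (indicator_mem_DiagSet 𝒮 hBopen hBcpt.isClosed hBcpt hBunits)).2
    rwa [conv_indicator_absorb 𝒮 n m (fun x hx => hBunits hx) (fun a ha => ⟨a, ha, rfl⟩)] at h1
  have hpu : ∀ x, conv 𝒮 m n x ≠ 0 → 𝒮.src x = x := fun x hx => hpD.2 hx
  have hqu : ∀ x, conv 𝒮 n m x ≠ 0 → 𝒮.src x = x := fun x hx => hqD.2 hx
  -- associativity consequences
  have hpm : conv 𝒮 (conv 𝒮 m n) m = m := by
    rw [conv_assoc 𝒮 m n m Hmr Hms, hmnm]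
  have hqn : conv 𝒮 (conv 𝒮 n m) n = n := by
    rw [conv_assoc 𝒮 n m n Hnr Hns, hnmn]
  -- key values of p and q
  have hp1 : ∀ α, m α ≠ 0 → conv 𝒮 m n (𝒮.rng α) = 1 := by
    intro α hα
    have h1 : conv 𝒮 (conv 𝒮 m n) m α = m α := by rw [hpm]
    rw [conv_diag_left 𝒮 hpu m α] at h1
    exact mul_right_cancel₀ hα (by rw [h1, one_mul])
  have hp2 : ∀ β, n β ≠ 0 → conv 𝒮 m n (𝒮.src β) = 1 := by
    intro β hβ
    have h1 : conv 𝒮 n (conv 𝒮 m n) β = n β := by rw [hnmn]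
    rw [conv_diag_right 𝒮 hpu n β] at h1
    exact mul_left_cancel₀ hβ (by rw [h1, mul_one])
  have hq1 : ∀ β, n β ≠ 0 → conv 𝒮 n m (𝒮.rng β) = 1 := by
    intro β hβ
    have h1 : conv 𝒮 (conv 𝒮 n m) n β = n β := by rw [hqn]
    rw [conv_diag_left 𝒮 hqu n β] at h1
    exact mul_right_cancel₀ hβ (by rw [h1, one_mul])
  have hq2 : ∀ α, m α ≠ 0 → conv 𝒮 n m (𝒮.src α) = 1 := by
    intro α hα
    have h1 : conv 𝒮 m (conv 𝒮 n m) α = m α := by rw [hmnm]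
    rw [conv_diag_right 𝒮 hqu m α] at h1
    exact mul_left_cancel₀ hα (by rw [h1, mul_one])
  -- supports of p and q
  have hpsupp : ∀ x, conv 𝒮 m n x ≠ 0 → x ∈ A' ∧ x ∈ B := by
    intro x hx
    obtain ⟨a, b, ha, hb, hcomp, hmul⟩ := conv_ne_zero 𝒮 hx
    have hu : 𝒮.src x = x := hpu x hx
    constructor
    · refine ⟨a, ha, ?_⟩
      have he : 𝒮.rng x = 𝒮.rng a := by rw [← hmul, 𝒮.rng_mul a b hcomp]
      rw [← he, 𝒮.unit_rng hu]
    · refine ⟨b, hb, ?_⟩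
      have he : 𝒮.src x = 𝒮.src b := by rw [← hmul, 𝒮.src_mul a b hcomp]
      rw [← he, hu]
  have hqsupp : ∀ x, conv 𝒮 n m x ≠ 0 → x ∈ B' ∧ x ∈ A := by
    intro x hx
    obtain ⟨a, b, ha, hb, hcomp, hmul⟩ := conv_ne_zero 𝒮 hx
    have hu : 𝒮.src x = x := hqu x hx
    constructor
    · refine ⟨a, ha, ?_⟩
      have he : 𝒮.rng x = 𝒮.rng a := by rw [← hmul, 𝒮.rng_mul a b hcomp]
      rw [← he, 𝒮.unit_rng hu]
    · refine ⟨b, hb, ?_⟩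
      have he : 𝒮.src x = 𝒮.src b := by rw [← hmul, 𝒮.src_mul a b hcomp]
      rw [← he, hu]
  -- set identities
  have hBA' : B = A' := by
    apply Set.Subset.antisymm
    · rintro x ⟨β, hβ, rfl⟩
      exact (hpsupp _ (by rw [hp2 β hβ]; exact one_ne_zero)).1
    · rintro x ⟨α, hα, rfl⟩
      exact (hpsupp _ (by rw [hp1 α hα]; exact one_ne_zero)).2
  have hAB' : A = B' := by
    apply Set.Subset.antisymm
    · rintro x ⟨α, hα, rfl⟩
      exact (hqsupp _ (by rw [hq2 α hα]; exact one_ne_zero)).1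
    · rintro x ⟨β, hβ, rfl⟩
      exact (hqsupp _ (by rw [hq1 β hβ]; exact one_ne_zero)).2
  -- the function identities
  have hpfun : conv 𝒮 m n = Set.indicator B (fun _ => (1 : R)) := by
    funext x
    by_cases hx : x ∈ B
    · have hmem := hx
      rcases hx with ⟨β, hβ, rfl⟩
      rw [hp2 β hβ, Set.indicator_of_mem hmem]
    · rw [Set.indicator_of_notMem hx]
      by_contra hne
      exact hx (hpsupp x hne).2
  have hqfun : conv 𝒮 n m = Set.indicator A (fun _ => (1 : R)) := by
    funext x
    by_cases hx : x ∈ A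
    · have hmem := hx
      rcases hx with ⟨α, hα, rfl⟩
      rw [hq2 α hα, Set.indicator_of_mem hmem]
    · rw [Set.indicator_of_notMem hx]
      by_contra hne
      exact hx (hqsupp x hne).2
  exact ⟨hpfun, hBA', hqfun, hAB', hBcpt, hBopen, hBunits, hAcpt, hAopen, hAunits⟩
end

section
/- Let G be an ample Hausdorff groupoid, Γ a discrete group, and c : G → Γ a continuous cocycle. Define A_R(G)_g := { f ∈ A_R(G) : supp(f) ⊆ c⁻¹(g) } for g ∈ Γ. Then A_R(G) = ⊕_{g ∈ Γ} A_R(G)_g as R-modules, and A_R(G)_g * A_R(G)_h ⊆ A_R(G)_{gh} for all g, h ∈ Γ; i.e., this defines a Γ-grading of the Steinberg algebra. -/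
open Function

namespace SteinbergAux

variable {G : Type*} [TopologicalSpace G] [T2Space G] {R : Type*} [CommRing R]

/-- b is determined by a and ab. -/
lemma cancel_left (𝒢 : GroupoidStruct G) {a b : G} (hab : 𝒢.src a = 𝒢.rng b) :
    b = 𝒢.mul (𝒢.inv a) (𝒢.mul a b) := by
  rw [← 𝒢.mul_assoc' _ _ _ (𝒢.src_inv a) hab, 𝒢.inv_mul, hab, 𝒢.unit_mul]

lemma comp_of_rng_eq (𝒢 : GroupoidStruct G) {a η : G} (h : 𝒢.rng a = 𝒢.rng η) :
    𝒢.src a = 𝒢.rng (𝒢.mul (𝒢.inv a) η) := by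
  rw [𝒢.rng_mul _ _ (by rw [𝒢.src_inv, h]), 𝒢.rng_inv]

lemma mul_inv_mul (𝒢 : GroupoidStruct G) {a η : G} (h : 𝒢.rng a = 𝒢.rng η) :
    𝒢.mul a (𝒢.mul (𝒢.inv a) η) = η := by
  rw [← 𝒢.mul_assoc' _ _ _ (𝒢.rng_inv a).symm (by rw [𝒢.src_inv, h]), 𝒢.mul_inv, h,
    𝒢.unit_mul]

/-- In an étale groupoid, a compact set meets each range-fiber finitely. -/
lemma finite_rng_fiber (𝒢 : AmpleGroupoid G) {K : Set G} (hK : IsCompact K) (x : G) :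
    {α | α ∈ K ∧ 𝒢.rng α = x}.Finite := by
  choose e hmem hfun using 𝒢.etale_rng
  obtain ⟨t, ht⟩ := hK.elim_finite_subcover (fun a => (e a).source)
    (fun a => (e a).open_source) (fun a ha => Set.mem_iUnion.2 ⟨a, hmem a⟩)
  have hsub : {α | α ∈ K ∧ 𝒢.rng α = x} ⊆ ⋃ a ∈ t, {β ∈ (e a).source | 𝒢.rng β = x} := by
    intro α ⟨hαK, hαx⟩
    obtain ⟨a, hat, hαa⟩ := Set.mem_iUnion₂.1 (ht hαK)
    exact Set.mem_iUnion₂.2 ⟨a, hat, hαa, hαx⟩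
  refine Set.Finite.subset (Set.Finite.biUnion t.finite_toSet fun a _ => ?_) hsub
  refine Set.Subsingleton.finite fun β ⟨hβ, hβx⟩ γ ⟨hγ, hγx⟩ => (e a).injOn hβ hγ ?_
  rw [← hfun a]; rw [hβx, hγx]

/-- If a convolution is nonzero at a point, some composable pair contributes. -/
lemma exists_pair_of_conv_ne_zero {𝒢 : GroupoidStruct G} {f₁ f₂ : G → R} {η : G}
    (h : conv 𝒢 f₁ f₂ η ≠ 0) :
    ∃ p : G × G, 𝒢.src p.1 = 𝒢.rng p.2 ∧ 𝒢.mul p.1 p.2 = η ∧ f₁ p.1 ≠ 0 ∧ f₂ p.2 ≠ 0 := by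
  classical
  by_contra hc
  push_neg at hc
  apply h
  apply finsum_eq_zero_of_forall_eq_zero
  intro p
  rw [finsum_eq_if]
  split_ifs with hP
  · by_cases h1 : f₁ p.1 = 0
    · rw [h1, zero_mul]
    · rw [hc p hP.1 hP.2 h1, mul_zero]
  · rfl

/-- The support of a locally constant function is clopen. -/
lemma isClosed_support {f : G → R} (hf : IsLocallyConstant f) :
    IsClosed (support f) := by
  have : support f = {x | f x = 0}ᶜ := by ext x; simp [support]
  rw [this]
  exact (hf.isOpen_fiber 0).isClosed_compl


set_option maxHeartbeats 1000000 in
/-- Convolution of Steinberg functions is locally constant. -/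
lemma conv_isLocallyConstant (𝒢 : AmpleGroupoid G) {f₁ f₂ : G → R}
    (h₁ : f₁ ∈ SteinbergSet 𝒢.toGroupoidStruct R)
    (h₂ : f₂ ∈ SteinbergSet 𝒢.toGroupoidStruct R) :
    IsLocallyConstant (conv 𝒢.toGroupoidStruct f₁ f₂) := by
  classical
  obtain ⟨hlc₁, hK₁⟩ := h₁
  set ℊ := 𝒢.toGroupoidStruct with hℊ
  rw [IsLocallyConstant.iff_exists_open]
  intro η₀
  set S : Set G := {α | α ∈ support f₁ ∧ ℊ.rng α = ℊ.rng η₀} with hSdef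
  have hSfin : S.Finite := finite_rng_fiber 𝒢 hK₁ _
  choose e he hefun using 𝒢.etale_rng
  have hrng_eq : ∀ α x, ℊ.rng x = e α x := fun α x => congrFun (hefun α) x
  -- T2 separation data
  have hvex : ∀ α β : G, ∃ P : Set G × Set G, α ≠ β →
      IsOpen P.1 ∧ IsOpen P.2 ∧ α ∈ P.1 ∧ β ∈ P.2 ∧ Disjoint P.1 P.2 := by
    intro α β
    by_cases h : α ≠ β
    · obtain ⟨u, w, h1, h2, h3, h4, h5⟩ := t2_separation h
      exact ⟨(u, w), fun _ => ⟨h1, h2, h3, h4, h5⟩⟩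
    · exact ⟨(∅, ∅), fun h' => absurd h' h⟩
  choose v hv using hvex
  -- the disjoint neighbourhoods of the fiber points
  set U : G → Set G := fun α => ((e α).source ∩ {y | f₁ y = f₁ α}) ∩
    ⋂ β ∈ S, (if α = β then Set.univ else (v α β).1 ∩ (v β α).2) with hUdef
  have hUopen : ∀ α, IsOpen (U α) := by
    intro α
    refine (((e α).open_source.inter (hlc₁.isOpen_fiber _)).inter
      (hSfin.isOpen_biInter fun β _ => ?_))
    split_ifs with h
    · exact isOpen_univ
    · exact (hv α β h).1.inter (hv β α (Ne.symm h)).2.1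
  have hUmem : ∀ α, α ∈ U α := by
    intro α
    refine ⟨⟨he α, rfl⟩, Set.mem_iInter₂.2 fun β _ => ?_⟩
    split_ifs with h
    · trivial
    · exact ⟨(hv α β h).2.2.1, (hv β α (Ne.symm h)).2.2.2.1⟩
  have hUsub : ∀ α, U α ⊆ (e α).source := fun α => Set.Subset.trans
    Set.inter_subset_left Set.inter_subset_left
  have hUconst : ∀ α, ∀ y ∈ U α, f₁ y = f₁ α := fun α y hy => hy.1.2
  have hUdisj : ∀ α ∈ S, ∀ β ∈ S, α ≠ β → Disjoint (U α) (U β) := by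
    intro α hα β hβ hne
    have h1 : U α ⊆ (v α β).1 := by
      intro y hy
      have := Set.mem_iInter₂.1 hy.2 β hβ
      rw [if_neg hne] at this
      exact this.1
    have h2 : U β ⊆ (v α β).2 := by
      intro y hy
      have := Set.mem_iInter₂.1 hy.2 α hα
      rw [if_neg (Ne.symm hne)] at this
      exact this.2
    exact Set.disjoint_of_subset h1 h2 (hv α β hne).2.2.2.2
  -- the bad compact set and the good open set V around rng η₀
  set N : Set G := support f₁ \ ⋃ α ∈ S, U α with hNdef
  have hNcomp : IsCompact N := hK₁.diff (isOpen_biUnion fun α _ => hUopen α)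
  have hNclosed : IsClosed (ℊ.rng '' N) := (hNcomp.image 𝒢.continuous_rng).isClosed
  have hη₀N : ℊ.rng η₀ ∉ ℊ.rng '' N := by
    rintro ⟨β, ⟨hβsupp, hβU⟩, hβeq⟩
    exact hβU (Set.mem_biUnion (show β ∈ S from ⟨hβsupp, hβeq⟩) (hUmem β))
  set V : Set G := (ℊ.rng '' N)ᶜ ∩ ⋂ α ∈ S, (e α) '' (U α) with hVdef
  have hVopen : IsOpen V := hNclosed.isOpen_compl.inter (hSfin.isOpen_biInter fun α _ =>
    (e α).isOpen_image_of_subset_source (hUopen α) (hUsub α))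
  have hη₀V : ℊ.rng η₀ ∈ V := by
    refine ⟨hη₀N, Set.mem_iInter₂.2 fun α hα => ⟨α, hUmem α, ?_⟩⟩
    rw [← hrng_eq α α]
    exact hα.2
  -- the local sections
  set σ : G → G → G := fun α η => (e α).symm (ℊ.rng η) with hσdef
  have hσ : ∀ α ∈ S, ∀ η, ℊ.rng η ∈ V → σ α η ∈ U α ∧ ℊ.rng (σ α η) = ℊ.rng η := by
    intro α hα η hηV
    obtain ⟨u, hu, hurng⟩ := Set.mem_iInter₂.1 hηV.2 α hα
    have hσu : σ α η = u := by
      show (e α).symm (ℊ.rng η) = u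
      rw [← hurng, (e α).left_inv (hUsub α hu)]
    constructor
    · rw [hσu]; exact hu
    · rw [hσu, hrng_eq α u, hurng]
  -- the key finite-sum formula on rng ⁻¹' V
  have key : ∀ η, ℊ.rng η ∈ V →
      conv ℊ f₁ f₂ η = ∑ α ∈ hSfin.toFinset, f₁ (σ α η) * f₂ (ℊ.mul (ℊ.inv (σ α η)) η) := by
    intro η hηV
    set φ : G → G × G := fun α => (σ α η, ℊ.mul (ℊ.inv (σ α η)) η) with hφdef
    have hconv : conv ℊ f₁ f₂ η = ∑ᶠ p : G × G,
        if (ℊ.src p.1 = ℊ.rng p.2 ∧ ℊ.mul p.1 p.2 = η) then f₁ p.1 * f₂ p.2 else 0 :=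
      finsum_congr fun p => finsum_eq_if
    have hsupp : support (fun p : G × G =>
        if (ℊ.src p.1 = ℊ.rng p.2 ∧ ℊ.mul p.1 p.2 = η) then f₁ p.1 * f₂ p.2 else 0) ⊆
        ↑(hSfin.toFinset.image φ) := by
      intro p hp
      rw [mem_support] at hp
      by_cases hPP : ℊ.src p.1 = ℊ.rng p.2 ∧ ℊ.mul p.1 p.2 = η
      swap
      · rw [if_neg hPP] at hp; exact absurd rfl hp
      rw [if_pos hPP] at hp
      obtain ⟨hsrc, hmul⟩ := hPP
      have hp1 : f₁ p.1 ≠ 0 := fun h => hp (by rw [h, zero_mul])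
      have hrngp : ℊ.rng p.1 = ℊ.rng η := by rw [← hmul, ℊ.rng_mul _ _ hsrc]
      have hp1N : p.1 ∉ N := fun hN => hηV.1 ⟨p.1, hN, hrngp⟩
      have hp1U : p.1 ∈ ⋃ α ∈ S, U α := by
        by_contra h
        exact hp1N ⟨hp1, h⟩
      obtain ⟨α, hαS, hpU⟩ := Set.mem_iUnion₂.1 hp1U
      refine Finset.mem_coe.2 (Finset.mem_image.2 ⟨α, hSfin.mem_toFinset.2 hαS, ?_⟩)
      have hσp : σ α η = p.1 := by
        show (e α).symm (ℊ.rng η) = p.1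
        rw [← hrngp, hrng_eq α p.1, (e α).left_inv (hUsub α hpU)]
      have hp2 : p.2 = ℊ.mul (ℊ.inv p.1) η := by
        rw [← hmul]; exact cancel_left ℊ hsrc
      show (σ α η, ℊ.mul (ℊ.inv (σ α η)) η) = p
      rw [hσp, ← hp2]
    rw [hconv, finsum_eq_finset_sum_of_support_subset _ hsupp, Finset.sum_image ?inj]
    case inj =>
      intro α hα β hβ hfαβ
      have h1 := (hσ α (hSfin.mem_toFinset.1 hα) η hηV).1
      have h2 := (hσ β (hSfin.mem_toFinset.1 hβ) η hηV).1
      have hσeq : σ α η = σ β η := congrArg Prod.fst hfαβ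
      by_contra hne
      exact Set.disjoint_left.1
        (hUdisj α (hSfin.mem_toFinset.1 hα) β (hSfin.mem_toFinset.1 hβ) hne) h1 (hσeq ▸ h2)
    apply Finset.sum_congr rfl
    intro α hα
    have h1 := (hσ α (hSfin.mem_toFinset.1 hα) η hηV).2
    rw [if_pos ⟨comp_of_rng_eq ℊ h1, mul_inv_mul ℊ h1⟩]
  -- each term is constant on a neighbourhood of η₀
  have hterm : ∀ α ∈ S, {η | f₁ (σ α η) = f₁ α ∧
      f₂ (ℊ.mul (ℊ.inv (σ α η)) η) = f₂ (ℊ.mul (ℊ.inv α) η₀)} ∈ nhds η₀ := by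
    intro α hα
    have hαsrc : α ∈ (e α).source := he α
    have hrngα : ℊ.rng α = ℊ.rng η₀ := hα.2
    have htgt : ℊ.rng η₀ ∈ (e α).target := by
      rw [← hrngα, hrng_eq α α]
      exact (e α).map_source hαsrc
    have hψcont : ContinuousAt (fun η => σ α η) η₀ :=
      ((e α).continuousAt_symm htgt).comp 𝒢.continuous_rng.continuousAt
    have hψη₀ : σ α η₀ = α := by
      show (e α).symm (ℊ.rng η₀) = α
      rw [← hrngα, hrng_eq α α, (e α).left_inv hαsrc]
    have hpaircont : ContinuousAt (fun η => (ℊ.inv (σ α η), η)) η₀ :=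
      (𝒢.continuous_inv.continuousAt.comp hψcont).prodMk continuousAt_id
    have hev : ∀ᶠ η in nhds η₀,
        (ℊ.inv (σ α η), η) ∈ {p : G × G | ℊ.src p.1 = ℊ.rng p.2} := by
      have hO : IsOpen (ℊ.rng ⁻¹' (e α).target) := (e α).open_target.preimage 𝒢.continuous_rng
      filter_upwards [hO.mem_nhds htgt] with η hη
      show ℊ.src (ℊ.inv (σ α η)) = ℊ.rng η
      rw [ℊ.src_inv]
      show ℊ.rng ((e α).symm (ℊ.rng η)) = ℊ.rng η
      rw [hrng_eq α ((e α).symm (ℊ.rng η)), (e α).right_inv hη]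
    have hχcont : ContinuousAt (fun η => ℊ.mul (ℊ.inv (σ α η)) η) η₀ := by
      have h1 : Filter.Tendsto (fun η => (ℊ.inv (σ α η), η)) (nhds η₀)
          (nhdsWithin (ℊ.inv (σ α η₀), η₀) {p : G × G | ℊ.src p.1 = ℊ.rng p.2}) :=
        tendsto_nhdsWithin_iff.2 ⟨hpaircont, hev⟩
      have hmemc : ((ℊ.inv (σ α η₀), η₀) : G × G) ∈ {p : G × G | ℊ.src p.1 = ℊ.rng p.2} := by
        show ℊ.src (ℊ.inv (σ α η₀)) = ℊ.rng η₀
        rw [hψη₀, ℊ.src_inv, hrngα]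
      have h2 := 𝒢.continuousOn_mul _ hmemc
      have h3 := Filter.Tendsto.comp h2 h1
      exact h3
    have hχη₀ : ℊ.mul (ℊ.inv (σ α η₀)) η₀ = ℊ.mul (ℊ.inv α) η₀ := by rw [hψη₀]
    have m1 : (fun η => σ α η) ⁻¹' {y | f₁ y = f₁ α} ∈ nhds η₀ :=
      hψcont.preimage_mem_nhds ((hlc₁.isOpen_fiber (f₁ α)).mem_nhds (by
        show f₁ (σ α η₀) = f₁ α
        rw [hψη₀]))
    have m2 : (fun η => ℊ.mul (ℊ.inv (σ α η)) η) ⁻¹' {y | f₂ y = f₂ (ℊ.mul (ℊ.inv α) η₀)}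
        ∈ nhds η₀ :=
      hχcont.preimage_mem_nhds ((h₂.1.isOpen_fiber _).mem_nhds (by
        show f₂ (ℊ.mul (ℊ.inv (σ α η₀)) η₀) = f₂ (ℊ.mul (ℊ.inv α) η₀)
        rw [hχη₀]))
    filter_upwards [m1, m2] with η hm1 hm2
    exact ⟨hm1, hm2⟩
  -- assemble
  have hWmem : (ℊ.rng ⁻¹' V ∩ ⋂ α ∈ S, {η | f₁ (σ α η) = f₁ α ∧
      f₂ (ℊ.mul (ℊ.inv (σ α η)) η) = f₂ (ℊ.mul (ℊ.inv α) η₀)}) ∈ nhds η₀ :=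
    Filter.inter_mem ((hVopen.preimage 𝒢.continuous_rng).mem_nhds hη₀V)
      ((Filter.biInter_mem hSfin).2 hterm)
  have hconst : ∀ η ∈ (ℊ.rng ⁻¹' V ∩ ⋂ α ∈ S, {η | f₁ (σ α η) = f₁ α ∧
      f₂ (ℊ.mul (ℊ.inv (σ α η)) η) = f₂ (ℊ.mul (ℊ.inv α) η₀)}),
      conv ℊ f₁ f₂ η = ∑ α ∈ hSfin.toFinset, f₁ α * f₂ (ℊ.mul (ℊ.inv α) η₀) := by
    rintro η ⟨hη1, hη2⟩
    rw [key η hη1]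
    apply Finset.sum_congr rfl
    intro α hα
    have hm := Set.mem_iInter₂.1 hη2 α (hSfin.mem_toFinset.1 hα)
    rw [hm.1, hm.2]
  obtain ⟨t, htsub, htopen, hηt⟩ := mem_nhds_iff.1 hWmem
  refine ⟨t, htopen, hηt, fun η' hη' => ?_⟩
  rw [hconst η' (htsub hη'), hconst η₀ (mem_of_mem_nhds hWmem)]


/-- Convolution preserves the Steinberg algebra. -/
lemma conv_mem_steinberg (𝒢 : AmpleGroupoid G) {f₁ f₂ : G → R}
    (h₁ : f₁ ∈ SteinbergSet 𝒢.toGroupoidStruct R)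
    (h₂ : f₂ ∈ SteinbergSet 𝒢.toGroupoidStruct R) :
    conv 𝒢.toGroupoidStruct f₁ f₂ ∈ SteinbergSet 𝒢.toGroupoidStruct R := by
  set ℊ := 𝒢.toGroupoidStruct with hℊ
  have hlc := conv_isLocallyConstant 𝒢 h₁ h₂
  refine ⟨hlc, ?_⟩
  set D : Set (G × G) := (support f₁ ×ˢ support f₂) ∩ {p | ℊ.src p.1 = ℊ.rng p.2} with hD
  have hDcomp : IsCompact D := (h₁.2.prod h₂.2).inter_right
    (isClosed_eq (𝒢.continuous_src.comp continuous_fst) (𝒢.continuous_rng.comp continuous_snd))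
  have himg : IsCompact ((fun p : G × G => ℊ.mul p.1 p.2) '' D) :=
    hDcomp.image_of_continuousOn (𝒢.continuousOn_mul.mono Set.inter_subset_right)
  refine himg.of_isClosed_subset (isClosed_support hlc) ?_
  intro η hη
  obtain ⟨p, hsrc, hmul, hf1, hf2⟩ := exists_pair_of_conv_ne_zero hη
  exact ⟨p, ⟨⟨hf1, hf2⟩, hsrc⟩, hmul⟩

end SteinbergAux

/-- A continuous cocycle `c : G → Γ` induces a `Γ`-grading of the Steinberg algebra:
every element decomposes as a finite sum of homogeneous components, the decomposition is
direct (a finite sum of homogeneous components of distinct degrees vanishes only if each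
component vanishes), and `A_R(G)_g * A_R(G)_h ⊆ A_R(G)_{gh}`. -/
theorem steinberg_grading {G : Type*} [TopologicalSpace G] [T2Space G]
    {R : Type*} [CommRing R] (𝒢 : AmpleGroupoid G)
    {Γ : Type*} [Group Γ] (c : G → Γ) (hc : 𝒢.toGroupoidStruct.IsCocycle c)
    (hcont : IsLocallyConstant c) :
    (∀ f ∈ SteinbergSet 𝒢.toGroupoidStruct R, ∃ (F : Finset Γ) (comp : Γ → (G → R)),
      (∀ g ∈ F, comp g ∈ SteinbergSet 𝒢.toGroupoidStruct R ∧ InGrade c g (comp g)) ∧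
      f = ∑ g ∈ F, comp g) ∧
    (∀ (F : Finset Γ) (comp : Γ → (G → R)),
      (∀ g ∈ F, comp g ∈ SteinbergSet 𝒢.toGroupoidStruct R ∧ InGrade c g (comp g)) →
      (∑ g ∈ F, comp g) = 0 → ∀ g ∈ F, comp g = 0) ∧
    (∀ (g h : Γ) (f₁ f₂ : G → R), f₁ ∈ SteinbergSet 𝒢.toGroupoidStruct R →
      f₂ ∈ SteinbergSet 𝒢.toGroupoidStruct R → InGrade c g f₁ → InGrade c h f₂ →
      conv 𝒢.toGroupoidStruct f₁ f₂ ∈ SteinbergSet 𝒢.toGroupoidStruct R ∧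
      InGrade c (g * h) (conv 𝒢.toGroupoidStruct f₁ f₂)) := by
  classical
  refine ⟨?_, ?_, ?_⟩
  · -- decomposition into homogeneous components
    intro f hf
    obtain ⟨t, ht⟩ := hf.2.elim_finite_subcover (fun x : G => {y | c y = c x})
      (fun x => hcont.isOpen_fiber _) (fun x _ => Set.mem_iUnion.2 ⟨x, rfl⟩)
    refine ⟨t.image c, fun g η => if c η = g then f η else 0, ?_, ?_⟩
    · intro g _
      have hclosed : IsClosed {η | c η = g} := by
        rw [← isOpen_compl_iff]
        exact hcont {g}ᶜ
      refine ⟨⟨?_, ?_⟩, ?_⟩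
      · rw [IsLocallyConstant.iff_exists_open]
        intro x
        refine ⟨{y | c y = c x} ∩ {y | f y = f x},
          (hcont.isOpen_fiber _).inter (hf.1.isOpen_fiber _), ⟨rfl, rfl⟩, ?_⟩
        rintro y ⟨hy1, hy2⟩
        simp only [Set.mem_setOf_eq] at hy1 hy2
        simp only [hy1, hy2]
      · have heq : Function.support (fun η => if c η = g then f η else 0) =
            Function.support f ∩ {η | c η = g} := by
          ext η
          simp only [Function.mem_support, Set.mem_inter_iff, Set.mem_setOf_eq]
          constructor
          · intro hη
            by_cases h : c η = g
            · rw [if_pos h] at hη; exact ⟨hη, h⟩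
            · rw [if_neg h] at hη; exact absurd rfl hη
          · rintro ⟨h1, h2⟩
            rw [if_pos h2]; exact h1
        rw [heq]
        exact hf.2.inter_right hclosed
      · intro η hη
        by_cases h : c η = g
        · exact h
        · simp [h] at hη
    · funext η
      rw [Finset.sum_apply]
      by_cases hη : f η = 0
      · simp [hη]
      · have hηsupp : η ∈ Function.support f := hη
        obtain ⟨x, hxt, hx⟩ := Set.mem_iUnion₂.1 (ht hηsupp)
        have hcη : c η ∈ t.image c := Finset.mem_image.2 ⟨x, hxt, hx.symm⟩
        rw [Finset.sum_ite_eq (t.image c) (c η) (fun _ => f η), if_pos hcη]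
  · -- directness
    intro F comp hcomps hsum g hg
    funext η
    simp only [Pi.zero_apply]
    by_cases hη : c η = g
    · have h0 := congrFun hsum η
      rw [Finset.sum_apply] at h0
      have hzero : ∀ g' ∈ F, g' ≠ g → comp g' η = 0 := by
        intro g' hg' hne
        by_contra hne'
        exact hne (((hcomps g' hg').2 η hne').symm.trans hη)
      rw [Finset.sum_eq_single g hzero (fun h => absurd hg h)] at h0
      exact h0
    · by_contra hne
      exact hη ((hcomps g hg).2 η hne)
  · -- multiplicativity of the grading
    intro g h f₁ f₂ h₁ h₂ hg1 hg2
    refine ⟨SteinbergAux.conv_mem_steinberg 𝒢 h₁ h₂, ?_⟩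
    intro η hη
    obtain ⟨p, hsrc, hmul, hf1, hf2⟩ := SteinbergAux.exists_pair_of_conv_ne_zero hη
    rw [← hmul, hc _ _ hsrc, hg1 _ hf1, hg2 _ hf2]
end

section
/- Let G be an ample Hausdorff groupoid with continuous cocycle c : G → Γ, and let (m, n) ∈ A_R(G)_g × A_R(G)_{g⁻¹} be a normaliser of D_R(G) over a commutative integral domain R with identity such that supp(m) is a compact open bisection with supp(n) = supp(m)⁻¹. Then for every compact open subset U of s(supp(m)), one has m * 1_U * n = 1_{r(supp(m) ∩ s⁻¹(U))}. -/
section Aux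

open scoped Classical

variable {G : Type*} {R : Type*} [CommRing R] (S : GroupoidStruct G)

lemma conv_apply' (f g : G → R) (η : G) :
    conv S f g η = ∑ᶠ p : G × G,
      if S.src p.1 = S.rng p.2 ∧ S.mul p.1 p.2 = η then f p.1 * g p.2 else 0 := by
  unfold conv
  exact finsum_congr fun p => finsum_eq_if

lemma conv_single (f g : G → R) (η : G) (p₀ : G × G)
    (h : ∀ p : G × G, S.src p.1 = S.rng p.2 → S.mul p.1 p.2 = η →
      f p.1 ≠ 0 → g p.2 ≠ 0 → p = p₀) :
    conv S f g η =
      if S.src p₀.1 = S.rng p₀.2 ∧ S.mul p₀.1 p₀.2 = η then f p₀.1 * g p₀.2 else 0 := by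
  rw [conv_apply']
  refine finsum_eq_single _ p₀ fun p hp => ?_
  split_ifs with hcond
  · by_contra hne
    exact hp (h p hcond.1 hcond.2 (left_ne_zero_of_mul hne) (right_ne_zero_of_mul hne))
  · rfl

lemma conv_zero' (f g : G → R) (η : G)
    (h : ∀ p : G × G, S.src p.1 = S.rng p.2 → S.mul p.1 p.2 = η →
      f p.1 ≠ 0 → g p.2 ≠ 0 → False) :
    conv S f g η = 0 := by
  rw [conv_apply']
  refine finsum_eq_zero_of_forall_eq_zero fun p => ?_
  split_ifs with hcond
  · by_contra hne
    exact h p hcond.1 hcond.2 (left_ne_zero_of_mul hne) (right_ne_zero_of_mul hne)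
  · rfl

lemma conv_ne_zero' (f g : G → R) (η : G) (h : conv S f g η ≠ 0) :
    ∃ p : G × G, S.src p.1 = S.rng p.2 ∧ S.mul p.1 p.2 = η ∧ f p.1 ≠ 0 ∧ g p.2 ≠ 0 := by
  by_contra hc
  push_neg at hc
  exact h (conv_zero' S f g η fun p h1 h2 h3 h4 => h4 (hc p h1 h2 h3))

lemma normaliser_conjugation_key {G : Type*} {R : Type*} [CommRing R] [IsDomain R]
    (S : GroupoidStruct G) (m n : G → R)
    (hmnm : conv S m (conv S n m) = m)
    (hsi : Set.InjOn S.src (Function.support m))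
    (hri : Set.InjOn S.rng (Function.support m))
    (hninv : Function.support n = S.inv '' Function.support m)
    (U : Set G) (hUsub : U ⊆ S.src '' Function.support m) :
    conv S m (conv S (Set.indicator U (fun _ => (1 : R))) n)
      = Set.indicator (S.rng '' (Function.support m ∩ S.src ⁻¹' U)) (fun _ => (1 : R)) := by
  classical
  -- elements of U are units
  have hUunit : ∀ a ∈ U, S.src a = a := by
    intro a ha
    obtain ⟨x, _, rfl⟩ := hUsub ha
    exact S.src_src x
  -- support of n
  have hn_supp : ∀ b, n b ≠ 0 → m (S.inv b) ≠ 0 := by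
    intro b hb
    have hb' : b ∈ S.inv '' Function.support m := by
      rw [← hninv]; exact Function.mem_support.mpr hb
    obtain ⟨b', hb', rfl⟩ := hb'
    rw [S.inv_inv]; exact hb'
  have hpair : ∀ p : G × G, S.src p.1 = S.rng p.2 → m p.1 ≠ 0 → n p.2 ≠ 0 →
      p.2 = S.inv p.1 := by
    intro p h1 hm' hn'
    have hb : m (S.inv p.2) ≠ 0 := hn_supp p.2 hn'
    have e : S.src (S.inv p.2) = S.rng p.2 := S.src_inv p.2
    have h : p.1 = S.inv p.2 :=
      hsi (Function.mem_support.mpr hm') (Function.mem_support.mpr hb) (by rw [h1, ← e])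
    rw [h, S.inv_inv]
  have hpair' : ∀ p : G × G, S.src p.1 = S.rng p.2 → n p.1 ≠ 0 → m p.2 ≠ 0 →
      p.1 = S.inv p.2 := by
    intro p h1 hn' hm'
    have hb : m (S.inv p.1) ≠ 0 := hn_supp _ hn'
    have e1 : S.rng (S.inv p.1) = S.rng p.2 := by rw [S.rng_inv, h1]
    have h : S.inv p.1 = p.2 :=
      hri (Function.mem_support.mpr hb) (Function.mem_support.mpr hm') e1
    rw [← h, S.inv_inv]
  -- Step 1 : conv 1_U n
  have hq : ∀ β, conv S (Set.indicator U (fun _ => (1 : R))) n β =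
      if S.rng β ∈ U then n β else 0 := by
    intro β
    by_cases hin : S.rng β ∈ U
    · rw [conv_single S _ n β (S.rng β, β) ?_]
      · rw [if_pos ⟨S.src_rng β, S.unit_mul β⟩, Set.indicator_of_mem hin, one_mul,
          if_pos hin]
      · intro p h1 h2 hf _
        have hpU : p.1 ∈ U := Set.mem_of_indicator_ne_zero hf
        have hp1 : p.1 = S.rng p.2 := by rw [← hUunit p.1 hpU, h1]
        have hp2 : p.2 = β := by rw [← h2, hp1, S.unit_mul]
        exact Prod.ext (by rw [hp1, hp2]) hp2
    · rw [conv_zero' S _ n β ?_, if_neg hin]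
      intro p h1 h2 hf _
      have hpU : p.1 ∈ U := Set.mem_of_indicator_ne_zero hf
      have hp1 : p.1 = S.rng p.2 := by rw [← hUunit p.1 hpU, h1]
      have hp2 : p.2 = β := by rw [← h2, hp1, S.unit_mul]
      exact hin (by rw [← hp2, ← hp1]; exact hpU)
  -- Step 2 : m a * n (inv a) = 1 on the support of m
  have hkey : ∀ a, m a ≠ 0 → m a * n (S.inv a) = 1 := by
    intro a ha
    have step : conv S m (conv S n m) a = m a * (n (S.inv a) * m a) := by
      rw [conv_single S m (conv S n m) a (a, S.src a) ?_]
      · rw [if_pos ⟨(S.rng_src a).symm, S.mul_unit a⟩]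
        congr 1
        rw [conv_single S n m (S.src a) (S.inv a, a) ?_]
        · rw [if_pos ⟨S.src_inv a, S.inv_mul a⟩]
        · intro p h1 h2 hn' hm'
          have hp1 : p.1 = S.inv p.2 := hpair' p h1 hn' hm'
          have hp2 : p.2 = a := by
            refine hsi (Function.mem_support.mpr hm') (Function.mem_support.mpr ha) ?_
            rw [← h2, hp1, S.inv_mul]
          exact Prod.ext (by rw [hp1, hp2]) hp2
      · intro p h1 h2 hm' hd
        obtain ⟨q, hq1, hq2, hqn, hqm⟩ := conv_ne_zero' S n m p.2 hd
        have hq1' : q.1 = S.inv q.2 := hpair' q hq1 hqn hqm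
        have hp2 : p.2 = S.src q.2 := by rw [← hq2, hq1', S.inv_mul]
        have hsrc : S.src p.1 = S.src q.2 := by
          rw [h1, hp2, S.rng_src]
        have hp1 : p.1 = q.2 :=
          hsi (Function.mem_support.mpr hm') (Function.mem_support.mpr hqm) hsrc
        have hp1a : p.1 = a := by
          rw [← h2, hp2, ← hp1, S.mul_unit]
        exact Prod.ext hp1a (by rw [hp2, ← hp1, hp1a])
    have e : m a * (n (S.inv a) * m a) = m a := by rw [← step, hmnm]
    have h1 : n (S.inv a) * m a = 1 := mul_left_cancel₀ ha (by rw [e, mul_one])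
    rw [mul_comm]; exact h1
  -- Step 3 : the final computation
  funext η
  by_cases hη : η ∈ S.rng '' (Function.support m ∩ S.src ⁻¹' U)
  · obtain ⟨a₀, ⟨ha₀m, ha₀U⟩, rfl⟩ := hη
    have ha₀m' : m a₀ ≠ 0 := ha₀m
    have hmem : S.rng a₀ ∈ S.rng '' (Function.support m ∩ S.src ⁻¹' U) :=
      ⟨a₀, ⟨ha₀m, ha₀U⟩, rfl⟩
    rw [conv_single S m _ (S.rng a₀) (a₀, S.inv a₀) ?_]
    · rw [if_pos ⟨(S.rng_inv a₀).symm, S.mul_inv a₀⟩, hq (S.inv a₀),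
        if_pos (by rw [S.rng_inv]; exact ha₀U), hkey a₀ ha₀m',
        Set.indicator_of_mem hmem]
    · intro p h1 h2 hm' hg
      rw [hq p.2] at hg
      by_cases hrU : S.rng p.2 ∈ U
      · rw [if_pos hrU] at hg
        have hp2 : p.2 = S.inv p.1 := hpair p h1 hm' hg
        have hrng : S.rng p.1 = S.rng a₀ := by rw [← h2, hp2, S.mul_inv]
        have hp1 : p.1 = a₀ :=
          hri (Function.mem_support.mpr hm') (Function.mem_support.mpr ha₀m') hrng
        exact Prod.ext hp1 (by rw [hp2, hp1])
      · rw [if_neg hrU] at hg; exact absurd rfl hg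
  · rw [conv_zero' S m _ η ?_, Set.indicator_of_notMem hη]
    intro p h1 h2 hm' hg
    rw [hq p.2] at hg
    by_cases hrU : S.rng p.2 ∈ U
    · rw [if_pos hrU] at hg
      have hp2 : p.2 = S.inv p.1 := hpair p h1 hm' hg
      have hη' : η = S.rng p.1 := by rw [← h2, hp2, S.mul_inv]
      refine hη ⟨p.1, ⟨Function.mem_support.mpr hm', ?_⟩, hη'.symm⟩
      show S.src p.1 ∈ U
      rw [h1]; exact hrU
    · rw [if_neg hrU] at hg; exact absurd rfl hg

end Aux

/-- If `(m, n)` is a normaliser of `D_R(G)` graded by `(g, g⁻¹)` such that `supp m` is a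
compact open bisection and `supp n = (supp m)⁻¹`, then for every compact open
`U ⊆ s(supp m)` one has `m * 1_U * n = 1_{r(supp m ∩ s⁻¹(U))}`. -/
theorem normaliser_conjugation_indicator {G : Type*} [TopologicalSpace G] [T2Space G]
    {R : Type*} [CommRing R] [IsDomain R] (𝒢 : AmpleGroupoid G)
    {Γ : Type*} [Group Γ] (c : G → Γ) (hc : 𝒢.toGroupoidStruct.IsCocycle c)
    (hcont : IsLocallyConstant c) (g : Γ) (m n : G → R)
    (hnorm : IsNormaliser 𝒢.toGroupoidStruct R m n)
    (hm : InGrade c g m) (hn : InGrade c g⁻¹ n)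
    (hmc : IsCompact (Function.support m)) (hmo : IsOpen (Function.support m))
    (hmb : 𝒢.toGroupoidStruct.IsBisection (Function.support m))
    (hninv : Function.support n = 𝒢.toGroupoidStruct.inv '' Function.support m) :
    ∀ U : Set G, IsCompact U → IsOpen U →
      U ⊆ 𝒢.toGroupoidStruct.src '' Function.support m →
      conv 𝒢.toGroupoidStruct m
          (conv 𝒢.toGroupoidStruct (Set.indicator U (fun _ => (1 : R))) n)
        = Set.indicator
            (𝒢.toGroupoidStruct.rng ''
              (Function.support m ∩ 𝒢.toGroupoidStruct.src ⁻¹' U))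
            (fun _ => (1 : R)) := by
  intro U _ _ hUsub
  exact normaliser_conjugation_key 𝒢.toGroupoidStruct m n hnorm.2.2.2.1 hmb.1 hmb.2 hninv U hUsub
end
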